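/- Let K be the stiffness matrix of a spring network in ℝ^d (d = 2 or 3) with nodes x_1,…,x_N, spring constants k_{ij}, and a partition into terminals B and interior nodes I. Let l_{ij} = l_{ji} be real perturbation coefficients with l_{ij} ≥ 0 whenever k_{ij} = 0, and let E be the matrix built from the coefficients l_{ij} by the same stiffness formula. Then there exists ε_0 > 0 such that for all ε, ε' ∈ (0, ε_0): the kernel of (K + εE)_II is contained in the kernel of K_II, and the kernel of (K + εE)_II equals the kernel of (K + ε'E)_II (in particular the kernel of the perturbed interior block is independent of ε). -/

import Mathlib

open scoped BigOperators
open Matrix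

noncomputable section

/-- The Moore–Penrose pseudoinverse of a real square matrix, characterized by the
four Penrose conditions (it exists and is unique for every real matrix). -/
noncomputable def mpinv {n : Type*} [Fintype n] [DecidableEq n]
    (A : Matrix n n ℝ) : Matrix n n ℝ :=
  @dite _
    (∃ X : Matrix n n ℝ,
      A * X * A = A ∧ X * A * X = X ∧ (A * X)ᵀ = A * X ∧ (X * A)ᵀ = X * A)
    (Classical.propDecidable _) (fun h => h.choose) (fun _ => 0)

/-- Euclidean norm of a vector in `Fin d → ℝ`. -/
noncomputable def enorm {d : ℕ} (v : Fin d → ℝ) : ℝ := Real.sqrt (∑ a, v a ^ 2)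

/-- Unit vector pointing from `p` towards `q`. -/
noncomputable def unitDir {d : ℕ} (p q : Fin d → ℝ) : Fin d → ℝ :=
  fun a => (_root_.enorm (q - p))⁻¹ * (q a - p a)

/-- Stiffness matrix of a spring network with node positions `x` and spring
constants `k`: the `d × d` off-diagonal block coupling nodes `i ≠ j` is
`-k i j • n_{ij} n_{ij}ᵀ` and the `i`-th diagonal block is
`∑ j ≠ i, k i j • n_{ij} n_{ij}ᵀ`. -/
noncomputable def stiffness {d : ℕ} {ι : Type*} [Fintype ι] [DecidableEq ι]
    (x : ι → Fin d → ℝ) (k : ι → ι → ℝ) :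
    Matrix (ι × Fin d) (ι × Fin d) ℝ :=
  Matrix.of fun p q =>
    if p.1 = q.1 then
      ∑ j ∈ Finset.univ.filter (fun j => j ≠ p.1),
        k p.1 j * (unitDir (x p.1) (x j) p.2 * unitDir (x p.1) (x j) q.2)
    else
      -(k p.1 q.1 * (unitDir (x p.1) (x q.1) p.2 * unitDir (x p.1) (x q.1) q.2))

/-- `(x, k)` is a spring network: nodes are at distinct positions and the spring
constants are symmetric and nonnegative. -/
def IsSpringNetwork {d : ℕ} {ι : Type*} (x : ι → Fin d → ℝ) (k : ι → ι → ℝ) : Prop :=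
  Function.Injective x ∧ (∀ i j, k i j = k j i) ∧ (∀ i j, 0 ≤ k i j)

/-- The block of a matrix indexed by `(nodes × Fin d)` selected by the node
maps `f` and `g`. -/
def blk {d : ℕ} {ι κ₁ κ₂ : Type*} (K : Matrix (ι × Fin d) (ι × Fin d) ℝ)
    (f : κ₁ → ι) (g : κ₂ → ι) : Matrix (κ₁ × Fin d) (κ₂ × Fin d) ℝ :=
  K.submatrix (Prod.map f id) (Prod.map g id)

/-- Generalized Schur complement `K_BB - K_BI K_II† K_IB` eliminating the
interior nodes `I`. -/
noncomputable def schurResp {d : ℕ} {B I : Type*} [Fintype B] [Fintype I]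
    [DecidableEq B] [DecidableEq I]
    (K : Matrix ((B ⊕ I) × Fin d) ((B ⊕ I) × Fin d) ℝ) :
    Matrix (B × Fin d) (B × Fin d) ℝ :=
  blk K Sum.inl Sum.inl -
    blk K Sum.inl Sum.inr * mpinv (blk K Sum.inr Sum.inr) * blk K Sum.inr Sum.inl

/-- Static response matrix at the terminals `B` of the spring network `(x, k)`
with interior nodes `I`. -/
noncomputable def staticResponse {d : ℕ} {B I : Type*} [Fintype B] [Fintype I]
    [DecidableEq B] [DecidableEq I]
    (x : (B ⊕ I) → Fin d → ℝ) (k : (B ⊕ I) → (B ⊕ I) → ℝ) :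
    Matrix (B × Fin d) (B × Fin d) ℝ :=
  schurResp (stiffness x k)

/-- Balanced system of forces `f` supported at the points `x`: the total force
vanishes and the total torque vanishes (the torque being recorded as the
antisymmetric matrix `x_i ∧ f_i`, which for `d = 2` is equivalent to the scalar
wedge `u ∧ v = u 0 * v 1 - u 1 * v 0` and for `d = 3` to the cross product). -/
def IsBalanced {d : ℕ} {ι : Type*} [Fintype ι]
    (x f : ι → Fin d → ℝ) : Prop :=
  (∀ a, ∑ i, f i a = 0) ∧ ∀ a b, ∑ i, (x i a * f i b - x i b * f i a) = 0

/-- Planar wedge product. -/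
def wedge2 (u v : Fin 2 → ℝ) : ℝ := u 0 * v 1 - u 1 * v 0

/-- Cross product in `ℝ³`. -/
def cross3 (u v : Fin 3 → ℝ) : Fin 3 → ℝ :=
  ![u 1 * v 2 - u 2 * v 1, u 2 * v 0 - u 0 * v 2, u 0 * v 1 - u 1 * v 0]

/-- The `ε`-neighborhood `{y | dist (y, C) ≤ ε}` of a set `C` (for a closed set
`C`, membership is equivalent to being within Euclidean distance `ε` of some
point of `C`). -/
def epsNbhd {d : ℕ} (C : Set (Fin d → ℝ)) (ε : ℝ) : Set (Fin d → ℝ) :=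
  {y | ∃ z ∈ C, _root_.enorm (y - z) ≤ ε}

/-- Combine terminal and interior displacements into a displacement of all
nodes. -/
def glue {d : ℕ} {B I : Type*} (uB : B × Fin d → ℝ) (uI : I × Fin d → ℝ) :
    (B ⊕ I) × Fin d → ℝ :=
  fun p => Sum.elim (fun b => uB (b, p.2)) (fun i => uI (i, p.2)) p.1

/-- The reduced stiffness matrix `K̃` at the nodes `B ⊕ J` of a spring–mass
network with massless interior nodes `L`, obtained by eliminating `L`. -/
noncomputable def dynKtilde {d : ℕ} {B J L : Type*} [Fintype B] [Fintype J] [Fintype L]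
    [DecidableEq B] [DecidableEq J] [DecidableEq L]
    (x : ((B ⊕ J) ⊕ L) → Fin d → ℝ) (k : ((B ⊕ J) ⊕ L) → ((B ⊕ J) ⊕ L) → ℝ) :
    Matrix ((B ⊕ J) × Fin d) ((B ⊕ J) × Fin d) ℝ :=
  schurResp (stiffness x k)

/-- The diagonal mass matrix `M_JJ` of the interior nodes with mass. -/
noncomputable def massJJ {d : ℕ} {B J L : Type*} [Fintype J] [DecidableEq J]
    (m : (B ⊕ J) ⊕ L → ℝ) : Matrix (J × Fin d) (J × Fin d) ℝ :=
  Matrix.diagonal fun p => m (Sum.inl (Sum.inr p.1))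

/-- The diagonal mass matrix `M_BB` of the terminal nodes. -/
noncomputable def massBB {d : ℕ} {B J L : Type*} [Fintype B] [DecidableEq B]
    (m : (B ⊕ J) ⊕ L → ℝ) : Matrix (B × Fin d) (B × Fin d) ℝ :=
  Matrix.diagonal fun p => m (Sum.inl (Sum.inl p.1))

/-- Dynamic response function
`W(ω) = K̃_BB - ω² M_BB - K̃_BJ (K̃_JJ - ω² M_JJ)⁻¹ K̃_JB` of a spring–mass
network with terminals `B`, interior nodes `J` carrying the masses `m` and
massless interior nodes `L`. -/
noncomputable def dynResponse {d : ℕ} {B J L : Type*} [Fintype B] [Fintype J] [Fintype L]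
    [DecidableEq B] [DecidableEq J] [DecidableEq L]
    (x : ((B ⊕ J) ⊕ L) → Fin d → ℝ) (k : ((B ⊕ J) ⊕ L) → ((B ⊕ J) ⊕ L) → ℝ)
    (m : (B ⊕ J) ⊕ L → ℝ) (ω : ℝ) : Matrix (B × Fin d) (B × Fin d) ℝ :=
  blk (dynKtilde x k) Sum.inl Sum.inl - ω ^ 2 • massBB m -
    blk (dynKtilde x k) Sum.inl Sum.inr *
      (blk (dynKtilde x k) Sum.inr Sum.inr - ω ^ 2 • massJJ m)⁻¹ *
      blk (dynKtilde x k) Sum.inr Sum.inl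

section Aux
variable {d : ℕ} {ι : Type*} [Fintype ι] [DecidableEq ι]

omit [Fintype ι] [DecidableEq ι] in
lemma enorm_sub_symm (p q : Fin d → ℝ) : _root_.enorm (p - q) = _root_.enorm (q - p) := by
  unfold _root_.enorm
  congr 1
  apply Finset.sum_congr rfl
  intro a _
  simp only [Pi.sub_apply]
  ring

omit [Fintype ι] [DecidableEq ι] in
lemma unitDir_symm (p q : Fin d → ℝ) (a : Fin d) : unitDir q p a = - unitDir p q a := by
  unfold unitDir
  rw [enorm_sub_symm]
  ring

/-- `t_{ij} = n_{ij} · w_i`. -/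
noncomputable def tgap (x : ι → Fin d → ℝ) (w : ι × Fin d → ℝ) (i j : ι) : ℝ :=
  ∑ a, unitDir (x i) (x j) a * w (i, a)

/-- `s_{ij} = n_{ij} · (w_i - w_j)`. -/
noncomputable def sgap (x : ι → Fin d → ℝ) (w : ι × Fin d → ℝ) (i j : ι) : ℝ :=
  ∑ a, unitDir (x i) (x j) a * (w (i, a) - w (j, a))

omit [Fintype ι] [DecidableEq ι] in
lemma sgap_symm (x : ι → Fin d → ℝ) (w : ι × Fin d → ℝ) (i j : ι) :
    sgap x w j i = sgap x w i j := by
  unfold sgap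
  apply Finset.sum_congr rfl
  intro a _
  rw [unitDir_symm]
  ring

omit [Fintype ι] [DecidableEq ι] in
lemma tgap_add (x : ι → Fin d → ℝ) (w : ι × Fin d → ℝ) (i j : ι) :
    tgap x w i j + tgap x w j i = sgap x w i j := by
  unfold tgap sgap
  rw [← Finset.sum_add_distrib]
  apply Finset.sum_congr rfl
  intro a _
  rw [unitDir_symm (x i) (x j)]
  ring

lemma stiffness_mulVec (x : ι → Fin d → ℝ) (c : ι → ι → ℝ) (w : ι × Fin d → ℝ)
    (i : ι) (a : Fin d) :
    (stiffness x c *ᵥ w) (i, a) =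
      ∑ j ∈ Finset.univ.filter (fun j => j ≠ i),
        c i j * unitDir (x i) (x j) a * sgap x w i j := by
  simp only [Matrix.mulVec, dotProduct]
  rw [Fintype.sum_prod_type]
  rw [← Finset.sum_filter_add_sum_filter_not Finset.univ (fun j => j = i)]
  have h1 : ∑ j ∈ Finset.univ.filter (fun j => j = i), ∑ b, stiffness x c (i, a) (j, b) * w (j, b)
      = ∑ j ∈ Finset.univ.filter (fun j => j ≠ i),
          c i j * unitDir (x i) (x j) a * (∑ b, unitDir (x i) (x j) b * w (i, b)) := by
    rw [Finset.filter_eq' Finset.univ i, if_pos (Finset.mem_univ i), Finset.sum_singleton]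
    simp only [stiffness, Matrix.of_apply, if_pos rfl, if_true]
    simp only [Finset.sum_mul]
    rw [Finset.sum_comm]
    apply Finset.sum_congr rfl
    intro j _
    rw [Finset.mul_sum]
    apply Finset.sum_congr rfl
    intro b _
    ring
  have h2 : ∑ j ∈ Finset.univ.filter (fun j => ¬ j = i), ∑ b, stiffness x c (i, a) (j, b) * w (j, b)
      = ∑ j ∈ Finset.univ.filter (fun j => j ≠ i),
          -(c i j * unitDir (x i) (x j) a * (∑ b, unitDir (x i) (x j) b * w (j, b))) := by
    apply Finset.sum_congr rfl
    intro j hj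
    have hji : j ≠ i := by simpa using hj
    have hij : ¬ i = j := fun h => hji h.symm
    simp only [stiffness, Matrix.of_apply, if_neg hij]
    rw [Finset.mul_sum, ← Finset.sum_neg_distrib]
    apply Finset.sum_congr rfl
    intro b _
    ring
  rw [h1, h2, ← Finset.sum_add_distrib]
  apply Finset.sum_congr rfl
  intro j _
  unfold sgap
  rw [← sub_eq_add_neg, ← mul_sub, ← Finset.sum_sub_distrib]
  congr 1
  apply Finset.sum_congr rfl
  intro b _
  ring

end Aux
section Aux2
variable {d : ℕ} {ι : Type*} [Fintype ι] [DecidableEq ι]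

lemma swapsum (f : ι → ι → ℝ) :
    (∑ i, ∑ j ∈ Finset.univ.filter (fun j => j ≠ i), f i j)
      = ∑ i, ∑ j ∈ Finset.univ.filter (fun j => j ≠ i), f j i := by
  simp only [Finset.sum_filter]
  rw [Finset.sum_comm]
  apply Finset.sum_congr rfl
  intro i _
  apply Finset.sum_congr rfl
  intro j _
  by_cases h : i = j
  · subst h; simp
  · rw [if_pos h, if_pos (fun hh => h hh.symm)]

lemma stiffness_quadform_aux (x : ι → Fin d → ℝ) (c : ι → ι → ℝ) (w : ι × Fin d → ℝ) :
    w ⬝ᵥ (stiffness x c *ᵥ w) =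
      ∑ i, ∑ j ∈ Finset.univ.filter (fun j => j ≠ i), c i j * tgap x w i j * sgap x w i j := by
  rw [dotProduct, Fintype.sum_prod_type]
  apply Finset.sum_congr rfl
  intro i _
  simp only [stiffness_mulVec, Finset.mul_sum]
  rw [Finset.sum_comm]
  apply Finset.sum_congr rfl
  intro j _
  unfold tgap
  rw [Finset.mul_sum, Finset.sum_mul]
  apply Finset.sum_congr rfl
  intro a _
  ring

lemma stiffness_quadform (x : ι → Fin d → ℝ) (c : ι → ι → ℝ) (hsym : ∀ i j, c i j = c j i)
    (w : ι × Fin d → ℝ) :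
    2 * (w ⬝ᵥ (stiffness x c *ᵥ w)) =
      ∑ i, ∑ j ∈ Finset.univ.filter (fun j => j ≠ i), c i j * (sgap x w i j) ^ 2 := by
  have h1 := stiffness_quadform_aux x c w
  have h2 : w ⬝ᵥ (stiffness x c *ᵥ w)
      = ∑ i, ∑ j ∈ Finset.univ.filter (fun j => j ≠ i), c i j * tgap x w j i * sgap x w i j := by
    rw [h1, swapsum (fun i j => c i j * tgap x w i j * sgap x w i j)]
    apply Finset.sum_congr rfl
    intro i _
    apply Finset.sum_congr rfl
    intro j _
    rw [hsym i j, sgap_symm x w i j]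
  calc 2 * (w ⬝ᵥ (stiffness x c *ᵥ w))
      = (∑ i, ∑ j ∈ Finset.univ.filter (fun j => j ≠ i), c i j * tgap x w i j * sgap x w i j)
        + ∑ i, ∑ j ∈ Finset.univ.filter (fun j => j ≠ i), c i j * tgap x w j i * sgap x w i j := by
        rw [← h1, ← h2]; ring
    _ = _ := by
        rw [← Finset.sum_add_distrib]
        apply Finset.sum_congr rfl
        intro i _
        rw [← Finset.sum_add_distrib]
        apply Finset.sum_congr rfl
        intro j _
        rw [← tgap_add x w i j]
        ring

end Aux2
section Aux3
variable {d : ℕ} {B I : Type*} [Fintype B] [Fintype I] [DecidableEq B] [DecidableEq I]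

lemma stiffness_add_smul {ι : Type*} [Fintype ι] [DecidableEq ι]
    (x : ι → Fin d → ℝ) (k l : ι → ι → ℝ) (ε : ℝ) :
    stiffness x k + ε • stiffness x l = stiffness x fun i j => k i j + ε * l i j := by
  ext ⟨i, a⟩ ⟨j, b⟩
  simp only [Matrix.add_apply, Matrix.smul_apply, stiffness, Matrix.of_apply, smul_eq_mul]
  by_cases h : i = j
  · rw [if_pos h, if_pos h, if_pos h, Finset.mul_sum, ← Finset.sum_add_distrib]
    apply Finset.sum_congr rfl
    intro j' _
    ring
  · rw [if_neg h, if_neg h, if_neg h]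
    ring

omit [DecidableEq B] [DecidableEq I] in
lemma blk_mulVec_glue (M : Matrix ((B ⊕ I) × Fin d) ((B ⊕ I) × Fin d) ℝ)
    (u : I × Fin d → ℝ) (i : I) (a : Fin d) :
    (blk M Sum.inr Sum.inr *ᵥ u) (i, a) = (M *ᵥ glue (0 : B × Fin d → ℝ) u) (Sum.inr i, a) := by
  simp only [Matrix.mulVec, dotProduct, blk, Matrix.submatrix_apply, Prod.map]
  rw [Fintype.sum_prod_type, Fintype.sum_prod_type, Fintype.sum_sum_type]
  simp [glue]

omit [DecidableEq B] [DecidableEq I] in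
lemma dot_glue (M : Matrix ((B ⊕ I) × Fin d) ((B ⊕ I) × Fin d) ℝ) (u : I × Fin d → ℝ) :
    glue (0 : B × Fin d → ℝ) u ⬝ᵥ (M *ᵥ glue (0 : B × Fin d → ℝ) u)
      = u ⬝ᵥ (blk M Sum.inr Sum.inr *ᵥ u) := by
  rw [dotProduct, dotProduct, Fintype.sum_prod_type, Fintype.sum_sum_type,
    Fintype.sum_prod_type]
  simp only [glue, Sum.elim_inl, Sum.elim_inr, Pi.zero_apply, zero_mul, Finset.sum_const_zero,
    zero_add]
  apply Finset.sum_congr rfl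
  intro i _
  apply Finset.sum_congr rfl
  intro a _
  rw [blk_mulVec_glue]

lemma block_kernel_iff (x : (B ⊕ I) → Fin d → ℝ) (c : (B ⊕ I) → (B ⊕ I) → ℝ)
    (hsym : ∀ i j, c i j = c j i) (hpos : ∀ i j, 0 ≤ c i j) (u : I × Fin d → ℝ) :
    blk (stiffness x c) Sum.inr Sum.inr *ᵥ u = 0 ↔
      ∀ i j : B ⊕ I, j ≠ i → c i j ≠ 0 → sgap x (glue (0 : B × Fin d → ℝ) u) i j = 0 := by
  set w := glue (0 : B × Fin d → ℝ) u with hw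
  constructor
  · intro h i j hji hc
    have hQ : w ⬝ᵥ (stiffness x c *ᵥ w) = 0 := by
      rw [dot_glue, h]
      simp [dotProduct]
    have h2 : ∑ i, ∑ j ∈ Finset.univ.filter (fun j => j ≠ i), c i j * (sgap x w i j) ^ 2 = 0 := by
      rw [← stiffness_quadform x c hsym w, hQ]
      ring
    have hnn : ∀ i' ∈ (Finset.univ : Finset (B ⊕ I)),
        0 ≤ ∑ j' ∈ Finset.univ.filter (fun j' => j' ≠ i'), c i' j' * (sgap x w i' j') ^ 2 :=
      fun i' _ => Finset.sum_nonneg fun j' _ => mul_nonneg (hpos i' j') (sq_nonneg _)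
    have h3 := (Finset.sum_eq_zero_iff_of_nonneg hnn).mp h2 i (Finset.mem_univ i)
    have hnn2 : ∀ j' ∈ Finset.univ.filter (fun j' => j' ≠ i),
        0 ≤ c i j' * (sgap x w i j') ^ 2 :=
      fun j' _ => mul_nonneg (hpos i j') (sq_nonneg _)
    have h4 := (Finset.sum_eq_zero_iff_of_nonneg hnn2).mp h3 j
      (Finset.mem_filter.mpr ⟨Finset.mem_univ j, hji⟩)
    have h5 : (sgap x w i j) ^ 2 = 0 := by
      rcases mul_eq_zero.mp h4 with h' | h'
      · exact absurd h' hc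
      · exact h'
    exact pow_eq_zero_iff (n := 2) (by norm_num) |>.mp h5
  · intro h
    funext p
    obtain ⟨i, a⟩ := p
    show (blk (stiffness x c) Sum.inr Sum.inr *ᵥ u) (i, a) = 0
    rw [blk_mulVec_glue, ← hw, stiffness_mulVec]
    apply Finset.sum_eq_zero
    intro j hj
    rcases eq_or_ne (c (Sum.inr i) j) 0 with hc | hc
    · rw [hc]
      ring
    · rw [h (Sum.inr i) j (by simpa using hj) hc]
      ring

end Aux3
/-- for small enough `ε > 0`, the floppy modes of the perturbed
network `K + εE` are floppy modes of the unperturbed network, and the kernel of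
the perturbed interior block is independent of `ε`. -/
theorem perturbed_kernel_stable {d : ℕ} (hd : d = 2 ∨ d = 3)
    {B I : Type*} [Fintype B] [Fintype I] [DecidableEq B] [DecidableEq I]
    (x : (B ⊕ I) → Fin d → ℝ) (k l : (B ⊕ I) → (B ⊕ I) → ℝ)
    (hnet : IsSpringNetwork x k)
    (hlsymm : ∀ i j, l i j = l j i)
    (hlnew : ∀ i j, k i j = 0 → 0 ≤ l i j) :
    ∃ ε₀ : ℝ, 0 < ε₀ ∧ ∀ ε ε' : ℝ, 0 < ε → ε < ε₀ → 0 < ε' → ε' < ε₀ →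
      (∀ u : I × Fin d → ℝ,
        blk (stiffness x k + ε • stiffness x l) Sum.inr Sum.inr *ᵥ u = 0 →
        blk (stiffness x k) Sum.inr Sum.inr *ᵥ u = 0) ∧
      (∀ u : I × Fin d → ℝ,
        blk (stiffness x k + ε • stiffness x l) Sum.inr Sum.inr *ᵥ u = 0 ↔
        blk (stiffness x k + ε' • stiffness x l) Sum.inr Sum.inr *ᵥ u = 0) := by
  obtain ⟨-, hksymm, hkpos⟩ := hnet
  classical
  set r : (B ⊕ I) → (B ⊕ I) → ℝ := fun i j =>
    if k i j = 0 then 1 else k i j / (|l i j| + 1) with hr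
  set F : Finset ℝ :=
    insert 1 (Finset.univ.image fun p : (B ⊕ I) × (B ⊕ I) => r p.1 p.2) with hF
  have hFne : F.Nonempty := ⟨1, Finset.mem_insert_self _ _⟩
  have hFpos : ∀ y ∈ F, 0 < y := by
    intro y hy
    rcases Finset.mem_insert.mp hy with h | h
    · rw [h]; norm_num
    · obtain ⟨p, -, rfl⟩ := Finset.mem_image.mp h
      by_cases hk : k p.1 p.2 = 0
      · simp [hr, hk]
      · have hkp : 0 < k p.1 p.2 := lt_of_le_of_ne (hkpos p.1 p.2) (Ne.symm hk)
        have : r p.1 p.2 = k p.1 p.2 / (|l p.1 p.2| + 1) := if_neg hk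
        rw [this]
        positivity
  refine ⟨F.min' hFne, hFpos _ (F.min'_mem hFne), ?_⟩
  intro ε ε' hε hε₀ hε' hε'₀
  have key : ∀ η : ℝ, 0 < η → η < F.min' hFne → ∀ i j,
      0 ≤ k i j + η * l i j ∧ (k i j + η * l i j ≠ 0 ↔ (k i j ≠ 0 ∨ l i j ≠ 0)) := by
    intro η hη hηlt i j
    have hrmem : r i j ∈ F := Finset.mem_insert_of_mem
      (Finset.mem_image.mpr ⟨(i, j), Finset.mem_univ _, rfl⟩)
    have hηr : η < r i j := lt_of_lt_of_le hηlt (F.min'_le _ hrmem)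
    by_cases hk : k i j = 0
    · have hl := hlnew i j hk
      have hmul : 0 ≤ η * l i j := mul_nonneg hη.le hl
      rw [hk]
      refine ⟨by linarith, ?_, ?_⟩
      · intro h
        right
        intro hl0
        apply h
        rw [hl0]
        ring
      · rintro (h | h)
        · exact absurd rfl h
        · have hlp : 0 < l i j := lt_of_le_of_ne hl (Ne.symm h)
          have : 0 < η * l i j := mul_pos hη hlp
          intro habs
          linarith [habs ▸ this]
    · have hkp : 0 < k i j := lt_of_le_of_ne (hkpos i j) (Ne.symm hk)
      have hrr : r i j = k i j / (|l i j| + 1) := if_neg hk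
      have hden : (0 : ℝ) < |l i j| + 1 := by positivity
      have h1 : η * (|l i j| + 1) < k i j := by
        rw [hrr] at hηr
        calc η * (|l i j| + 1) < k i j / (|l i j| + 1) * (|l i j| + 1) :=
              mul_lt_mul_of_pos_right hηr hden
          _ = k i j := div_mul_cancel₀ _ (ne_of_gt hden)
      have h2 : η * |l i j| < k i j := by nlinarith
      have h3 : 0 < k i j + η * l i j := by
        have hna : -|l i j| ≤ l i j := neg_abs_le (l i j)
        nlinarith
      exact ⟨h3.le, fun _ => Or.inl hk, fun _ => ne_of_gt h3⟩
  have csym : ∀ η : ℝ, ∀ i j : B ⊕ I, k i j + η * l i j = k j i + η * l j i :=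
    fun η i j => by rw [hksymm, hlsymm]
  have hrw : ∀ η : ℝ, blk (stiffness x k + η • stiffness x l) Sum.inr Sum.inr
      = blk (stiffness x fun i j => k i j + η * l i j) Sum.inr Sum.inr := by
    intro η
    rw [stiffness_add_smul]
  constructor
  · intro u hu
    rw [hrw ε] at hu
    have hcond := (block_kernel_iff x _ (csym ε)
      (fun i j => (key ε hε hε₀ i j).1) u).mp hu
    refine (block_kernel_iff x k hksymm hkpos u).mpr fun i j hji hc =>
      hcond i j hji (((key ε hε hε₀ i j).2).mpr (Or.inl hc))
  · intro u
    rw [hrw ε, hrw ε',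
      block_kernel_iff x _ (csym ε) (fun i j => (key ε hε hε₀ i j).1) u,
      block_kernel_iff x _ (csym ε') (fun i j => (key ε' hε' hε'₀ i j).1) u]
    constructor <;> intro h i j hji hc
    · exact h i j hji (((key ε hε hε₀ i j).2).mpr (((key ε' hε' hε'₀ i j).2).mp hc))
    · exact h i j hji (((key ε' hε' hε'₀ i j).2).mpr (((key ε hε hε₀ i j).2).mp hc))
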